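/- Let f₁,…,fₙ : X → X be continuous open maps (X the circle S¹ or a closed interval) and let M be a minimal set for IFS(f₁,…,fₙ). If M is infinite, then M is uncountable. -/

import Mathlib

open Set Topology Filter

/-- The circle. -/
abbrev S1 := AddCircle (1 : ℝ)

/-- Apply a word `l = [i₁, …, i_k]` of generators: `f i₁ ∘ ⋯ ∘ f i_k`. -/
def applyWord {X : Type*} {n : ℕ} (f : Fin n → X → X) (l : List (Fin n)) (x : X) : X :=
  l.foldr (fun i y => f i y) x

/-- The orbit of `x` under the semigroup `IFS(f₁,…,fₙ)` (nonempty words). -/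
def orbitIFS {X : Type*} {n : ℕ} (f : Fin n → X → X) (x : X) : Set X :=
  {y | ∃ l : List (Fin n), l ≠ [] ∧ y = applyWord f l x}

/-- `M` is a minimal set for the IFS generated by `f₁,…,fₙ`. -/
def IsMinimalIFS {X : Type*} [TopologicalSpace X] {n : ℕ} (f : Fin n → X → X)
    (M : Set X) : Prop :=
  M.Nonempty ∧ IsClosed M ∧ (∀ i, f i '' M ⊆ M) ∧
    ∀ x ∈ M, closure (orbitIFS f x) = M

/-- A Cantor set: nonempty, compact, perfect and totally disconnected. -/
def IsCantorSet {X : Type*} [TopologicalSpace X] (K : Set X) : Prop :=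
  K.Nonempty ∧ IsCompact K ∧ Perfect K ∧ IsTotallyDisconnected K

/-- `X` is (homeomorphic to) the circle or a (nondegenerate) closed interval. -/
def IsCircleOrInterval (X : Type*) [TopologicalSpace X] : Prop :=
  Nonempty (X ≃ₜ S1) ∨ ∃ a b : ℝ, a < b ∧ Nonempty (X ≃ₜ Set.Icc a b)

/-- The canonical decomposition `M = 𝓘 ∪ K ∪ N` of a closed set:
`𝓘` is the interior (union of components of the interior), `K` is the maximal
Cantor set contained in `M \ 𝓘` (possibly empty), and `N` is the countable remainder. -/
def IsCanonicalDecomp {X : Type*} [TopologicalSpace X] (M I K N : Set X) : Prop :=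
  I = interior M ∧
  (IsCantorSet K ∨ K = ∅) ∧
  K ⊆ M \ I ∧
  (∀ K₁ : Set X, IsCantorSet K₁ → K ⊆ K₁ → K₁ ⊆ M \ I → K₁ = K) ∧
  N = M \ (I ∪ K) ∧
  N.Countable

/-- A symmetric Cantorval: a nonempty compact set which is the closure of its interior,
and such that both endpoints of every nontrivial connected component are accumulation
points of one-point connected components. -/
def IsSymmetricCantorval {X : Type*} [TopologicalSpace X] (M : Set X) : Prop :=
  M.Nonempty ∧ IsCompact M ∧ M = closure (interior M) ∧
  ∀ x ∈ M, ¬ (connectedComponentIn M x).Subsingleton →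
    ∀ z ∈ frontier (connectedComponentIn M x),
      AccPt z (𝓟 {y | y ∈ M ∧ connectedComponentIn M y = {y}})


/-- Local injectivity at every point (in the weak "isolated fiber point" sense). -/
def LocInj {Y : Type*} [TopologicalSpace Y] (g : Y → Y) : Prop :=
  ∀ z : Y, ∀ᶠ m in 𝓝 z, g m = g z → m = z

lemma final_aux {X : Type*} [TopologicalSpace X] [T2Space X] [CompactSpace X] {n : ℕ}
    {f : Fin n → X → X} (hcont : ∀ i, Continuous (f i)) (hfib : ∀ i, LocInj (f i))
    {M : Set X} (hM : IsMinimalIFS f M) (hinf : M.Infinite) (hcount : M.Countable) : False := by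
  obtain ⟨hne, hcl, hinv, hmin⟩ := hM
  set D := derivedSet M with hDdef
  have hDM : D ⊆ M := (derivedSet_subset_closure M).trans hcl.closure_subset
  have hDcl : IsClosed D := isClosed_derivedSet M
  obtain ⟨z₀, -, hz₀⟩ := hinf.exists_accPt_of_subset_isCompact hcl.isCompact Subset.rfl
  have hz₀D : z₀ ∈ D := hz₀
  have hDinv : ∀ i, ∀ x ∈ D, f i x ∈ D := by
    intro i x hx
    have hx' : AccPt x (𝓟 M) := hx
    rw [accPt_iff_nhds] at hx'
    show AccPt (f i x) (𝓟 M)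
    rw [accPt_iff_nhds]
    intro V hV
    have h1 : (f i) ⁻¹' V ∈ 𝓝 x := (hcont i).continuousAt.preimage_mem_nhds hV
    obtain ⟨y, ⟨hyW, hyM⟩, hyne⟩ := hx' _ ((hfib i x).and h1)
    refine ⟨f i y, ⟨hyW.2, hinv i ⟨y, hyM, rfl⟩⟩, fun h => hyne (hyW.1 h)⟩
  have horb : ∀ x ∈ D, ∀ l : List (Fin n), applyWord f l x ∈ D := by
    intro x hx l
    induction l with
    | nil => exact hx
    | cons i l ih => exact hDinv i _ ih
  have hDeq : D = M := by
    refine subset_antisymm hDM ?_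
    have h1 : closure (orbitIFS f z₀) = M := hmin _ (hDM hz₀D)
    rw [← h1]
    refine closure_minimal ?_ hDcl
    rintro y ⟨l, -, rfl⟩
    exact horb _ hz₀D l
  -- Baire category on the compact Hausdorff subspace M
  haveI : CompactSpace M := isCompact_iff_compactSpace.mp hcl.isCompact
  haveI : Countable ↥M := hcount.to_subtype
  haveI : Nonempty ↥M := hne.to_subtype
  have hBaire : ∃ x : M, (interior ({x} : Set ↥M)).Nonempty := by
    apply nonempty_interior_of_iUnion_of_closed (fun x : ↥M => isClosed_singleton)
    exact iUnion_of_singleton ↥M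
  obtain ⟨x, hx⟩ := hBaire
  have hxo : IsOpen ({x} : Set ↥M) := by
    have h2 : interior ({x} : Set ↥M) = {x} := by
      refine subset_antisymm interior_subset ?_
      obtain ⟨y, hy⟩ := hx
      have hyx : y ∈ ({x} : Set ↥M) := interior_subset hy
      rw [mem_singleton_iff] at hyx
      subst hyx
      exact singleton_subset_iff.mpr hy
    rw [← h2]; exact isOpen_interior
  rw [isOpen_induced_iff] at hxo
  obtain ⟨U, hU, hUx⟩ := hxo
  have hxU : (x : X) ∈ U := by
    have : x ∈ (Subtype.val ⁻¹' U : Set ↥M) := by rw [hUx]; rfl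
    exact this
  have hxD : AccPt (x : X) (𝓟 M) := by
    have : (x : X) ∈ D := by rw [hDeq]; exact x.2
    exact this
  rw [accPt_iff_nhds] at hxD
  obtain ⟨y, ⟨hyU, hyM⟩, hyne⟩ := hxD U (hU.mem_nhds hxU)
  have : (⟨y, hyM⟩ : ↥M) ∈ (Subtype.val ⁻¹' U : Set ↥M) := hyU
  rw [hUx] at this
  exact hyne (congrArg Subtype.val this)

lemma LocInj.of_homeomorph {X Y : Type*} [TopologicalSpace X] [TopologicalSpace Y]
    (e : X ≃ₜ Y) {f : X → X} (hc : Continuous f) (ho : IsOpenMap f)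
    (H : ∀ g : Y → Y, Continuous g → IsOpenMap g → LocInj g) : LocInj f := by
  intro z
  set g : Y → Y := e ∘ f ∘ e.symm with hg
  have hgc : Continuous g := e.continuous.comp (hc.comp e.symm.continuous)
  have hgo : IsOpenMap g := e.isOpenMap.comp (ho.comp e.symm.isOpenMap)
  have h1 := H g hgc hgo (e z)
  have h2 : Tendsto e (𝓝 z) (𝓝 (e z)) := e.continuous.continuousAt
  filter_upwards [h2.eventually h1] with m hm hfm
  have : g (e m) = g (e z) := by simp [hg, hfm]
  exact e.injective (hm this)

section Interval

variable {a b : ℝ}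

lemma icc_no_isolated (hab : a < b) (y : Icc a b) {O : Set (Icc a b)} (hO : IsOpen O)
    (hyO : y ∈ O) : ∃ w ∈ O, w ≠ y := by
  obtain ⟨ε, hε, hball⟩ := Metric.isOpen_iff.mp hO y hyO
  rcases lt_or_eq_of_le y.2.2 with h | h
  · have ht1 : y.1 < min b (y.1 + ε / 2) := lt_min h (by linarith)
    have htI : min b (y.1 + ε / 2) ∈ Icc a b :=
      ⟨le_trans y.2.1 ht1.le, min_le_left _ _⟩
    refine ⟨⟨_, htI⟩, hball ?_, ?_⟩
    · rw [Metric.mem_ball, Subtype.dist_eq, Real.dist_eq, abs_of_pos (by linarith)]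
      have : min b (y.1 + ε / 2) ≤ y.1 + ε / 2 := min_le_right _ _
      linarith
    · intro hcon
      exact absurd (congrArg Subtype.val hcon) (by simpa using ht1.ne')
  · have ht1 : max a (b - ε / 2) < y.1 := by
      rw [h]
      exact max_lt hab (by linarith)
    have htI : max a (b - ε / 2) ∈ Icc a b := ⟨le_max_left _ _, le_trans ht1.le y.2.2⟩
    refine ⟨⟨_, htI⟩, hball ?_, ?_⟩
    · rw [Metric.mem_ball, Subtype.dist_eq, Real.dist_eq, abs_of_neg (by linarith)]
      have : b - ε / 2 ≤ max a (b - ε / 2) := le_max_right _ _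
      have hyb : y.1 = b := h
      linarith
    · intro hcon
      exact absurd (congrArg Subtype.val hcon) (by simpa using ht1.ne)

lemma icc_open_max (hab : a < b) {O : Set (Icc a b)} (hO : IsOpen O) {w : Icc a b}
    (hw : w ∈ O) (hmax : ∀ y ∈ O, y ≤ w) : w.1 = b := by
  by_contra hne
  have hwb : w.1 < b := lt_of_le_of_ne w.2.2 hne
  obtain ⟨ε, hε, hball⟩ := Metric.isOpen_iff.mp hO w hw
  have ht1 : w.1 < min b (w.1 + ε / 2) := lt_min hwb (by linarith)
  have htI : min b (w.1 + ε / 2) ∈ Icc a b := ⟨le_trans w.2.1 ht1.le, min_le_left _ _⟩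
  have hmem : (⟨_, htI⟩ : Icc a b) ∈ Metric.ball w ε := by
    rw [Metric.mem_ball, Subtype.dist_eq, Real.dist_eq, abs_of_pos (by linarith)]
    have : min b (w.1 + ε / 2) ≤ w.1 + ε / 2 := min_le_right _ _
    linarith
  have := hmax _ (hball hmem)
  rw [← Subtype.coe_le_coe] at this
  exact absurd this (not_le.mpr ht1)

lemma icc_open_min (hab : a < b) {O : Set (Icc a b)} (hO : IsOpen O) {w : Icc a b}
    (hw : w ∈ O) (hmin : ∀ y ∈ O, w ≤ y) : w.1 = a := by
  by_contra hne
  have hwa : a < w.1 := lt_of_le_of_ne w.2.1 (Ne.symm hne)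
  obtain ⟨ε, hε, hball⟩ := Metric.isOpen_iff.mp hO w hw
  have ht1 : max a (w.1 - ε / 2) < w.1 := max_lt hwa (by linarith)
  have htI : max a (w.1 - ε / 2) ∈ Icc a b := ⟨le_max_left _ _, le_trans ht1.le w.2.2⟩
  have hmem : (⟨_, htI⟩ : Icc a b) ∈ Metric.ball w ε := by
    rw [Metric.mem_ball, Subtype.dist_eq, Real.dist_eq, abs_of_neg (by linarith)]
    have : w.1 - ε / 2 ≤ max a (w.1 - ε / 2) := le_max_right _ _
    linarith
  have := hmin _ (hball hmem)
  rw [← Subtype.coe_le_coe] at this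
  exact absurd this (not_le.mpr ht1)

lemma icc_star (hab : a < b) (g : Icc a b → Icc a b) (hgc : Continuous g)
    (hgo : IsOpenMap g) {u v : Icc a b} (huv : u < v) (hguv : g u = g v) :
    ∃ c : Icc a b, u < c ∧ c < v ∧ ((g c).1 = a ∨ (g c).1 = b) ∧
      ((g u).1 = b → (g c).1 = a) ∧ ((g u).1 = a → (g c).1 = b) := by
  have huv' : u.1 < v.1 := huv
  set S : Set (Icc a b) := Subtype.val ⁻¹' (Icc u.1 v.1) with hSdef
  have hScl : IsClosed S := isClosed_Icc.preimage continuous_subtype_val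
  have hSc : IsCompact S := hScl.isCompact
  have huS : u ∈ S := by simp [hSdef, mem_Icc]; exact huv.le
  have hvS : v ∈ S := by simp [hSdef, mem_Icc]; exact huv.le
  obtain ⟨p, hpS, hpmax⟩ := hSc.exists_isMaxOn ⟨u, huS⟩ hgc.continuousOn
  obtain ⟨q, hqS, hqmin⟩ := hSc.exists_isMinOn ⟨u, huS⟩ hgc.continuousOn
  set T : Set (Icc a b) := Subtype.val ⁻¹' (Ioo u.1 v.1) with hTdef
  have hTopen : IsOpen T := isOpen_Ioo.preimage continuous_subtype_val
  have hTS : T ⊆ S := fun w hw => Ioo_subset_Icc_self hw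
  have hmidI : (u.1 + v.1) / 2 ∈ Icc a b := ⟨le_trans u.2.1 (by linarith), le_trans (by linarith : (u.1+v.1)/2 ≤ v.1) v.2.2⟩
  have hmidT : (⟨(u.1 + v.1) / 2, hmidI⟩ : Icc a b) ∈ T := by
    show (u.1 + v.1) / 2 ∈ Ioo u.1 v.1
    constructor <;> linarith
  have hgT : IsOpen (g '' T) := hgo T hTopen
  by_cases hconst : g p = g q
  · exfalso
    have hall : ∀ w ∈ S, g w = g p :=
      fun w hw => le_antisymm (hpmax hw) (hconst ▸ hqmin hw)
    have him : g '' T = {g p} := by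
      apply subset_antisymm
      · rintro y ⟨w, hw, rfl⟩
        exact hall w (hTS hw)
      · rintro y (rfl : y = g p)
        exact ⟨_, hmidT, (hall _ (hTS hmidT)).symm ▸ rfl⟩
    obtain ⟨w, hwO, hwne⟩ := icc_no_isolated hab (g p) hgT (him ▸ rfl)
    rw [him] at hwO
    exact hwne hwO
  · have hqp : g q < g p := lt_of_le_of_ne (hqmin hpS) fun h => hconst h.symm
    have interior_of : ∀ w : Icc a b, w ∈ S → g w ≠ g u → w ∈ T := by
      intro w hw hne
      have h1 : u.1 ≤ w.1 := hw.1
      have h2 : w.1 ≤ v.1 := hw.2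
      have hwu : w ≠ u := fun h => hne (by rw [h])
      have hwv : w ≠ v := fun h => hne (by rw [h, ← hguv])
      exact ⟨lt_of_le_of_ne h1 fun h => hwu (Subtype.ext h.symm),
        lt_of_le_of_ne h2 fun h => hwv (Subtype.ext h)⟩
    rcases lt_or_ge (g u) (g p) with hup | hup
    · have hpT : p ∈ T := interior_of p hpS (fun h => absurd hup (h ▸ lt_irrefl _))
      have hmax' : ∀ y ∈ g '' T, y ≤ g p := by
        rintro y ⟨w, hw, rfl⟩; exact hpmax (hTS hw)
      have hb : (g p).1 = b := icc_open_max hab hgT (mem_image_of_mem g hpT) hmax'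
      refine ⟨p, hpT.1, hpT.2, Or.inr hb, ?_, fun _ => hb⟩
      intro hub
      exfalso
      have h3 : (g u).1 < (g p).1 := hup
      have h4 : (g p).1 ≤ b := (g p).2.2
      linarith
    · have hqu : g q < g u := lt_of_lt_of_le hqp hup
      have hqT : q ∈ T := interior_of q hqS hqu.ne
      have hmin' : ∀ y ∈ g '' T, g q ≤ y := by
        rintro y ⟨w, hw, rfl⟩; exact hqmin (hTS hw)
      have ha : (g q).1 = a := icc_open_min hab hgT (mem_image_of_mem g hqT) hmin'
      refine ⟨q, hqT.1, hqT.2, Or.inl ha, fun _ => ha, ?_⟩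
      intro hua
      exfalso
      have h1 : a ≤ (g q).1 := (g q).2.1
      have h2 : (g q).1 < (g u).1 := hqu
      rw [hua] at h2
      linarith

lemma icc_locInj (hab : a < b) (g : Icc a b → Icc a b) (hgc : Continuous g)
    (hgo : IsOpenMap g) : LocInj g := by
  intro z
  by_contra hcon
  have hfreq : ∀ ε > (0:ℝ), ∃ m : Icc a b, dist m z < ε ∧ g m = g z ∧ m ≠ z := by
    intro ε hε
    have h1 : ∃ᶠ m in 𝓝 z, ¬(g m = g z → m = z) := Filter.not_eventually.mp hcon
    have h2 : ∀ᶠ m in 𝓝 z, m ∈ Metric.ball z ε := Metric.ball_mem_nhds z hε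
    obtain ⟨m, hm1, hm2⟩ := (h1.and_eventually h2).exists
    push_neg at hm1
    exact ⟨m, hm2, hm1.1, hm1.2⟩
  have step : ∀ ε > (0:ℝ), ∃ c : Icc a b, dist c z < ε ∧ ((g c).1 = a ∨ (g c).1 = b) ∧
      ((g z).1 = b → (g c).1 = a) ∧ ((g z).1 = a → (g c).1 = b) := by
    intro ε hε
    obtain ⟨m, hmd, hmg, hmne⟩ := hfreq ε hε
    rcases lt_or_gt_of_ne hmne with h | h
    · obtain ⟨c, hc1, hc2, hc3, hc4, hc5⟩ := icc_star hab g hgc hgo h hmg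
      rw [hmg] at hc4 hc5
      refine ⟨c, ?_, hc3, hc4, hc5⟩
      rw [Subtype.dist_eq, Real.dist_eq] at hmd ⊢
      have h1 : m.1 < c.1 := hc1
      have h2 : c.1 < z.1 := hc2
      rw [abs_of_neg (by linarith)]
      rw [abs_of_neg (by linarith : m.1 - z.1 < 0)] at hmd
      linarith
    · obtain ⟨c, hc1, hc2, hc3, hc4, hc5⟩ := icc_star hab g hgc hgo h hmg.symm
      refine ⟨c, ?_, hc3, hc4, hc5⟩
      rw [Subtype.dist_eq, Real.dist_eq] at hmd ⊢
      have h1 : z.1 < c.1 := hc1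
      have h2 : c.1 < m.1 := hc2
      rw [abs_of_pos (by linarith)]
      rw [abs_of_pos (by linarith : (0:ℝ) < m.1 - z.1)] at hmd
      linarith
  have hmem : ∀ s : Set ℝ, IsClosed s →
      (∀ ε > (0:ℝ), ∃ c : Icc a b, dist c z < ε ∧ (g c).1 ∈ s) → (g z).1 ∈ s := by
    intro s hs h
    have hcl : IsClosed {w : Icc a b | (g w).1 ∈ s} :=
      hs.preimage (continuous_subtype_val.comp hgc)
    have hzc : z ∈ closure {w : Icc a b | (g w).1 ∈ s} := by
      rw [Metric.mem_closure_iff]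
      intro ε hε
      obtain ⟨c, hc1, hc2⟩ := h ε hε
      exact ⟨c, hc2, by rwa [dist_comm]⟩
    rw [hcl.closure_eq] at hzc
    exact hzc
  have h1 : (g z).1 ∈ ({a, b} : Set ℝ) := by
    apply hmem _ (by
      have : ({a, b} : Set ℝ) = {a} ∪ {b} := rfl
      rw [this]
      exact isClosed_singleton.union isClosed_singleton)
    intro ε hε
    obtain ⟨c, hc1, hc2, -, -⟩ := step ε hε
    exact ⟨c, hc1, by rcases hc2 with h | h <;> simp [h]⟩
  rcases h1 with hz | hz
  · have : (g z).1 ∈ ({b} : Set ℝ) := by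
      apply hmem _ isClosed_singleton
      intro ε hε
      obtain ⟨c, hc1, -, -, hc5⟩ := step ε hε
      exact ⟨c, hc1, by simp [hc5 hz]⟩
    rw [mem_singleton_iff] at this
    rw [hz] at this
    exact absurd this hab.ne
  · rw [mem_singleton_iff] at hz
    have : (g z).1 ∈ ({a} : Set ℝ) := by
      apply hmem _ isClosed_singleton
      intro ε hε
      obtain ⟨c, hc1, -, hc4, -⟩ := step ε hε
      exact ⟨c, hc1, by simp [hc4 hz]⟩
    rw [mem_singleton_iff] at this
    rw [hz] at this
    exact absurd this.symm hab.ne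

end Interval

section Circle

open AddSubgroup

lemma frac_not_mem {x : ℝ} (h0 : 0 < x) (h1 : x < 1) : x ∉ zmultiples (1:ℝ) := by
  intro hmem
  rw [mem_zmultiples_iff] at hmem
  obtain ⟨n, hn⟩ := hmem
  rw [zsmul_one] at hn
  have h4 : 0 < n := by exact_mod_cast hn ▸ h0
  have h5 : n < 1 := by exact_mod_cast hn ▸ h1
  omega

lemma coe_ne_of_frac {x y : ℝ} (h0 : 0 < x - y) (h1 : x - y < 1) : (x : S1) ≠ (y : S1) := by
  intro h
  rw [QuotientAddGroup.eq_iff_sub_mem] at h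
  exact frac_not_mem h0 h1 h

lemma real_open_no_max {O : Set ℝ} (hO : IsOpen O) {w : ℝ} (hw : w ∈ O)
    (hmax : ∀ y ∈ O, y ≤ w) : False := by
  obtain ⟨ε, hε, hball⟩ := Metric.isOpen_iff.mp hO w hw
  have : w + ε / 2 ∈ O := hball (by rw [Metric.mem_ball, Real.dist_eq]; rw [abs_of_pos] <;> linarith)
  have := hmax _ this
  linarith

lemma real_open_no_min {O : Set ℝ} (hO : IsOpen O) {w : ℝ} (hw : w ∈ O)
    (hmin : ∀ y ∈ O, w ≤ y) : False := by
  obtain ⟨ε, hε, hball⟩ := Metric.isOpen_iff.mp hO w hw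
  have : w - ε / 2 ∈ O := hball (by rw [Metric.mem_ball, Real.dist_eq]; rw [abs_of_neg] <;> linarith)
  have := hmin _ this
  linarith

lemma circle_locInj (g : S1 → S1) (hgc : Continuous g) (hgo : IsOpenMap g) : LocInj g := by
  intro z
  by_contra hcon
  obtain ⟨z₀, rfl⟩ := QuotientAddGroup.mk_surjective z
  obtain ⟨w', hw'⟩ := QuotientAddGroup.mk_surjective (g ↑z₀)
  set φ := AddCircle.openPartialHomeomorphCoe (1:ℝ) (w' - 2⁻¹) with hφ
  have hπc : Continuous ((↑) : ℝ → S1) := continuous_quotient_mk'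
  have hgπ : Continuous fun t : ℝ => g ↑t := hgc.comp hπc
  have hgz_tgt : g ↑z₀ ∈ φ.target := by
    rw [hφ]
    simp only [AddCircle.openPartialHomeomorphCoe, OpenPartialHomeomorph.coe_mk_symm,
      OpenPartialHomeomorph.coe_mk]
    show g ↑z₀ ∈ ({((w' - 2⁻¹ : ℝ) : S1)}ᶜ : Set S1)
    rw [mem_compl_iff, mem_singleton_iff, ← hw']
    exact coe_ne_of_frac (by norm_num) (by norm_num)
  have h1 : (fun t : ℝ => g ↑t) ⁻¹' φ.target ∈ 𝓝 z₀ :=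
    hgπ.continuousAt.preimage_mem_nhds (φ.open_target.mem_nhds hgz_tgt)
  obtain ⟨U, hUsub, hUo, hz₀U⟩ := mem_nhds_iff.mp h1
  obtain ⟨ε₀, hε₀, hball⟩ := Metric.isOpen_iff.mp hUo z₀ hz₀U
  have hU' : ∀ t ∈ Metric.ball z₀ ε₀, g ↑t ∈ φ.target := fun t ht => hUsub (hball ht)
  set G : ℝ → ℝ := fun s => (φ.symm (g ↑s) : ℝ) with hG
  have hπG : ∀ s ∈ Metric.ball z₀ ε₀, ((G s : ℝ) : S1) = g ↑s := fun s hs =>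
    φ.right_inv (hU' s hs)
  have hGc : ContinuousOn G (Metric.ball z₀ ε₀) :=
    φ.symm.continuousOn.comp hgπ.continuousOn fun s hs => hU' s hs
  have hGopen : ∀ O : Set ℝ, IsOpen O → O ⊆ Metric.ball z₀ ε₀ → IsOpen (G '' O) := by
    intro O hO hsub
    have h2 : IsOpen (g '' (((↑) : ℝ → S1) '' O)) := hgo _ (QuotientAddGroup.isOpenMap_coe _ hO)
    have h3 : g '' (((↑) : ℝ → S1) '' O) ⊆ φ.target := by
      rintro y ⟨m, ⟨t, ht, rfl⟩, rfl⟩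
      exact hU' t (hsub ht)
    have h4 : IsOpen (φ.symm '' (g '' (((↑) : ℝ → S1) '' O))) :=
      φ.symm.isOpen_image_of_subset_source h2 (by rw [OpenPartialHomeomorph.symm_source]; exact h3)
    have h5 : G '' O = φ.symm '' (g '' (((↑) : ℝ → S1) '' O)) := by
      rw [image_image, image_image]
    rw [h5]
    exact h4
  -- find a fiber point with a representative in the ball
  have hVmem : ((↑) : ℝ → S1) '' (Metric.ball z₀ ε₀) ∈ 𝓝 (↑z₀ : S1) :=
    (QuotientAddGroup.isOpenMap_coe _ Metric.isOpen_ball).mem_nhds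
      (mem_image_of_mem _ (Metric.mem_ball_self hε₀))
  have hfr : ∃ᶠ m in 𝓝 (↑z₀ : S1), ¬(g m = g ↑z₀ → m = ↑z₀) := Filter.not_eventually.mp hcon
  obtain ⟨m, hm1, hm2⟩ := (hfr.and_eventually hVmem).exists
  push_neg at hm1
  obtain ⟨t, ht_ball, ht_eq⟩ := hm2
  have htne : t ≠ z₀ := fun h => hm1.2 (by rw [← ht_eq, h])
  have htfib : g ↑t = g ↑z₀ := by rw [ht_eq]; exact hm1.1
  have hGfib : G t = G z₀ := by rw [hG]; simp only [htfib]
  -- core argument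
  have core : ∀ u v : ℝ, u < v → Icc u v ⊆ Metric.ball z₀ ε₀ → G u = G v → False := by
    intro u v huv hsub hGuv
    obtain ⟨p, hpS, hpmax⟩ := isCompact_Icc.exists_isMaxOn (nonempty_Icc.mpr huv.le)
      (hGc.mono hsub)
    obtain ⟨q, hqS, hqmin⟩ := isCompact_Icc.exists_isMinOn (nonempty_Icc.mpr huv.le)
      (hGc.mono hsub)
    have hIm : IsOpen (G '' Ioo u v) :=
      hGopen _ isOpen_Ioo (Ioo_subset_Icc_self.trans hsub)
    by_cases hconst : G p = G q
    · have hall : ∀ w ∈ Icc u v, G w = G p :=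
        fun w hw => le_antisymm (hpmax hw) (hconst ▸ hqmin hw)
      have hmid : (u + v) / 2 ∈ Ioo u v := ⟨by linarith, by linarith⟩
      have hGpIm : G p ∈ G '' Ioo u v :=
        ⟨_, hmid, hall _ (Ioo_subset_Icc_self hmid)⟩
      refine real_open_no_max hIm hGpIm ?_
      rintro y ⟨w, hw, rfl⟩
      exact (hall w (Ioo_subset_Icc_self hw)).le
    · have hqp : G q < G p := lt_of_le_of_ne (hqmin hpS) fun h => hconst h.symm
      rcases lt_or_ge (G u) (G p) with hup | hup
      · have hpu : p ≠ u := fun h => absurd hup (h ▸ lt_irrefl _)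
        have hpv : p ≠ v := fun h => absurd hup (by rw [h, ← hGuv]; exact lt_irrefl _)
        have hpIoo : p ∈ Ioo u v :=
          ⟨lt_of_le_of_ne hpS.1 (Ne.symm hpu), lt_of_le_of_ne hpS.2 hpv⟩
        refine real_open_no_max hIm ⟨p, hpIoo, rfl⟩ ?_
        rintro y ⟨w, hw, rfl⟩
        exact hpmax (Ioo_subset_Icc_self hw)
      · have hqu : G q < G u := hqp.trans_le hup
        have hqu' : q ≠ u := fun h => absurd hqu (h ▸ lt_irrefl _)
        have hqv : q ≠ v := fun h => absurd hqu (by rw [h, ← hGuv]; exact lt_irrefl _)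
        have hqIoo : q ∈ Ioo u v :=
          ⟨lt_of_le_of_ne hqS.1 (Ne.symm hqu'), lt_of_le_of_ne hqS.2 hqv⟩
        refine real_open_no_min hIm ⟨q, hqIoo, rfl⟩ ?_
        rintro y ⟨w, hw, rfl⟩
        exact hqmin (Ioo_subset_Icc_self hw)
  rw [Metric.mem_ball, Real.dist_eq] at ht_ball
  have habs := abs_lt.mp ht_ball
  rcases lt_or_gt_of_ne htne with h | h
  · refine core t z₀ h ?_ hGfib
    intro s hs
    rw [Metric.mem_ball, Real.dist_eq]
    exact abs_lt.mpr ⟨by cases hs with | intro h1 h2 => linarith, by cases hs with | intro h1 h2 => linarith⟩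
  · refine core z₀ t h ?_ hGfib.symm
    intro s hs
    rw [Metric.mem_ball, Real.dist_eq]
    exact abs_lt.mpr ⟨by cases hs with | intro h1 h2 => linarith, by cases hs with | intro h1 h2 => linarith⟩

end Circle


theorem stmt2 {X : Type*} [TopologicalSpace X] (hX : IsCircleOrInterval X)
    {n : ℕ} (f : Fin n → X → X)
    (hcont : ∀ i, Continuous (f i)) (hopen : ∀ i, IsOpenMap (f i))
    (M : Set X) (hM : IsMinimalIFS f M) (hinf : M.Infinite) :
    ¬ M.Countable := by
  intro hcount
  rcases hX with ⟨⟨e⟩⟩ | ⟨a, b, hab, ⟨e⟩⟩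
  · haveI : CompactSpace X := e.symm.compactSpace
    haveI : T2Space X := e.isEmbedding.t2Space
    exact final_aux hcont
      (fun i => LocInj.of_homeomorph e (hcont i) (hopen i) circle_locInj) hM hinf hcount
  · haveI : CompactSpace X := e.symm.compactSpace
    haveI : T2Space X := e.isEmbedding.t2Space
    exact final_aux hcont
      (fun i => LocInj.of_homeomorph e (hcont i) (hopen i) (icc_locInj hab)) hM hinf hcount
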